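/- Let T: dom T ⊆ H₁ → H₂ be a closed densely defined operator between Hilbert spaces with closed range, and suppose the inverse of T restricted to (ker T)^⊥ is compact. Then the self-adjoint operator |T| = (T*T)^{1/2} restricted to (ker T)^⊥ has compact inverse, and (1+|T|)^{-1} − P_{ker T} is compact; in particular if ker T is finite dimensional then (1+|T|)^{-1} is compact. -/

import Mathlib

open scoped InnerProductSpace

/-- A continuous linear map into a finite-dimensional space is compact. -/
lemma isCompactOperator_of_finiteDimensional_codomain {E F : Type*} [NormedAddCommGroup E]
    [NormedSpace ℂ E] [NormedAddCommGroup F] [NormedSpace ℂ F] [FiniteDimensional ℂ F]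
    (f : E →L[ℂ] F) : IsCompactOperator ⇑f := by
  refine ⟨Metric.closedBall 0 ‖f‖, isCompact_closedBall 0 _, ?_⟩
  refine Filter.mem_of_superset (Metric.ball_mem_nhds 0 one_pos) fun x hx => ?_
  rw [Set.mem_preimage, mem_closedBall_zero_iff]
  calc ‖f x‖ ≤ ‖f‖ * ‖x‖ := f.le_opNorm x
    _ ≤ ‖f‖ * 1 := by
        have := (mem_ball_zero_iff.mp hx).le
        gcongr
    _ = ‖f‖ := mul_one _

/-- Let `T` be a closed densely defined operator between Hilbert spaces with closed range
whose inverse on the support `(ker T)ᗮ` is compact, and let `S = |T| = (T*T)^{1/2}` be the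
self-adjoint operator with the same domain, the same kernel and `‖Sx‖ = ‖Tx‖`.  Then:
(a) the (generalized) inverse of `S` on `(ker S)ᗮ` is compact;
(b) `(1+S)⁻¹ − P_{ker S}` is compact;
(c) if `ker T` is finite dimensional then `(1+S)⁻¹` is compact. -/
theorem stmt_15 {H₁ H₂ : Type*} [NormedAddCommGroup H₁] [InnerProductSpace ℂ H₁]
    [CompleteSpace H₁] [NormedAddCommGroup H₂] [InnerProductSpace ℂ H₂]
    [CompleteSpace H₂]
    (T : H₁ →ₗ.[ℂ] H₂) (hdenseT : Dense (T.domain : Set H₁)) (hclosedT : T.IsClosed)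
    (hrangeT : IsClosed ((LinearMap.range T.toFun : Submodule ℂ H₂) : Set H₂))
    (Tinv : H₂ →L[ℂ] H₁) (hTinvC : IsCompactOperator ⇑Tinv)
    (hTinv : ∀ x : T.domain,
      (x : H₁) ∈ ((LinearMap.ker T.toFun).map T.domain.subtype)ᗮ → Tinv (T x) = x)
    (S : H₁ →ₗ.[ℂ] H₁) (hdenseS : Dense (S.domain : Set H₁))
    (hSsa : LinearPMap.adjoint S = S) (hdom : S.domain = T.domain)
    (hnorm : ∀ (x : H₁) (hx : x ∈ S.domain) (hx' : x ∈ T.domain),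
      ‖S ⟨x, hx⟩‖ = ‖T ⟨x, hx'⟩‖)
    (hkerS : (LinearMap.ker S.toFun).map S.domain.subtype =
      (LinearMap.ker T.toFun).map T.domain.subtype) :
    (∀ Sinv : H₁ →L[ℂ] H₁,
      (∀ x : S.domain,
        (x : H₁) ∈ ((LinearMap.ker S.toFun).map S.domain.subtype)ᗮ → Sinv (S x) = x) →
      (∀ ξ ∈ (LinearMap.range S.toFun)ᗮ, Sinv ξ = 0) →
      (∀ ξ, Sinv ξ ∈ ((LinearMap.ker S.toFun).map S.domain.subtype)ᗮ) →
      IsCompactOperator ⇑Sinv) ∧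
    (∀ R Pk : H₁ →L[ℂ] H₁,
      (∀ x : S.domain, R ((x : H₁) + S x) = x) →
      (∀ y : H₁, ∃ x : S.domain, (x : H₁) + S x = y) →
      (∀ ξ ∈ (LinearMap.ker S.toFun).map S.domain.subtype, Pk ξ = ξ) →
      (∀ ξ ∈ ((LinearMap.ker S.toFun).map S.domain.subtype)ᗮ, Pk ξ = 0) →
      IsCompactOperator ⇑(R - Pk)) ∧
    (FiniteDimensional ℂ ((LinearMap.ker T.toFun).map T.domain.subtype) →
      ∀ R : H₁ →L[ℂ] H₁,
        (∀ x : S.domain, R ((x : H₁) + S x) = x) →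
        (∀ y : H₁, ∃ x : S.domain, (x : H₁) + S x = y) →
        IsCompactOperator ⇑R) := by
  classical
  set K : Submodule ℂ H₁ := (LinearMap.ker T.toFun).map T.domain.subtype with hKdef
  have hkerS' : (LinearMap.ker S.toFun).map S.domain.subtype = K := hkerS
  -- the kernel is closed
  have hKclosed : IsClosed (K : Set H₁) := by
    apply IsSeqClosed.isClosed
    intro u x hu hux
    have hgr : ∀ n, ((u n : H₁), (0 : H₂)) ∈ T.graph := by
      intro n
      obtain ⟨y, hy, hyu⟩ := Submodule.mem_map.mp (hu n)
      rw [T.mem_graph_iff]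
      exact ⟨y, hyu, hy⟩
    have hlim : Filter.Tendsto (fun n => ((u n : H₁), (0 : H₂))) Filter.atTop (nhds (x, 0)) :=
      hux.prodMk_nhds tendsto_const_nhds
    have hx : (x, (0 : H₂)) ∈ T.graph :=
      hclosedT.mem_of_tendsto hlim (Filter.Eventually.of_forall hgr)
    obtain ⟨y, hyx, hy0⟩ := T.mem_graph_iff.mp hx
    exact Submodule.mem_map.mpr ⟨y, hy0, hyx⟩
  haveI : CompleteSpace K := hKclosed.completeSpace_coe
  -- symmetry of S
  have hsym : ∀ (x y : S.domain), ⟪(S x : H₁), (y : H₁)⟫_ℂ = ⟪(x : H₁), S y⟫_ℂ := by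
    have h := LinearPMap.adjoint_isFormalAdjoint (hT := hdenseS)
    rw [hSsa] at h
    exact h
  -- the range of S is orthogonal to K
  have hSperp : ∀ x : S.domain, S x ∈ Kᗮ := by
    intro x
    rw [Submodule.mem_orthogonal]
    intro u hu
    rw [← hkerS'] at hu
    obtain ⟨z, hz, hzu⟩ := Submodule.mem_map.mp hu
    simp only [Submodule.subtype_apply] at hzu
    have hz0 : S z = 0 := LinearMap.mem_ker.mp hz
    rw [← hzu]
    calc ⟪(z : H₁), S x⟫_ℂ = ⟪(S z : H₁), (x : H₁)⟫_ℂ := (hsym z x).symm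
      _ = 0 := by rw [hz0, inner_zero_left]
  -- canonical representative modulo the kernel
  have hrep : ∀ x : S.domain, ∃ x' : S.domain,
      (x' : H₁) ∈ Kᗮ ∧ S x' = S x ∧ (x : H₁) - (x' : H₁) ∈ K := by
    intro x
    have hk : (Submodule.orthogonalProjectionOnto K (x : H₁) : H₁) ∈
        (LinearMap.ker S.toFun).map S.domain.subtype := by
      rw [hkerS']; exact SetLike.coe_mem _
    obtain ⟨z, hz, hzk⟩ := Submodule.mem_map.mp hk
    have hz0 : S z = 0 := LinearMap.mem_ker.mp hz
    simp only [Submodule.subtype_apply] at hzk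
    refine ⟨x - z, ?_, ?_, ?_⟩
    · have hcoe : ((x - z : S.domain) : H₁) = (x : H₁) - (Submodule.orthogonalProjectionOnto K (x : H₁) : H₁) := by
        rw [Submodule.coe_sub, hzk]
      rw [hcoe]
      exact Submodule.sub_starProjection_mem_orthogonal _
    · rw [LinearPMap.map_sub, hz0, sub_zero]
    · have hcoe : (x : H₁) - ((x - z : S.domain) : H₁) = (z : H₁) := by
        rw [Submodule.coe_sub, sub_sub_cancel]
      rw [hcoe, hzk]
      exact SetLike.coe_mem _
  -- Part (b), proved first since part (c) uses it
  have partb : ∀ R Pk : H₁ →L[ℂ] H₁,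
      (∀ x : S.domain, R ((x : H₁) + S x) = x) →
      (∀ y : H₁, ∃ x : S.domain, (x : H₁) + S x = y) →
      (∀ ξ ∈ (LinearMap.ker S.toFun).map S.domain.subtype, Pk ξ = ξ) →
      (∀ ξ ∈ ((LinearMap.ker S.toFun).map S.domain.subtype)ᗮ, Pk ξ = 0) →
      IsCompactOperator ⇑(R - Pk) := by
    intro R Pk hR hRsurj hPk1 hPk2
    rw [hkerS'] at hPk1 hPk2
    -- R lands in the domain
    have memS : ∀ ξ : H₁, R ξ ∈ S.domain := by
      intro ξ
      obtain ⟨x, hx⟩ := hRsurj ξ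
      rw [← hx, hR x]
      exact x.2
    have memT : ∀ ξ : H₁, R ξ ∈ T.domain := fun ξ => hdom ▸ memS ξ
    -- the key identity R ξ + S (R ξ) = ξ
    have hRS : ∀ ξ : H₁, R ξ + S ⟨R ξ, memS ξ⟩ = ξ := by
      intro ξ
      obtain ⟨x, hx⟩ := hRsurj ξ
      have hRx : R ξ = (x : H₁) := by rw [← hx, hR x]
      have hsub : (⟨R ξ, memS ξ⟩ : S.domain) = x := Subtype.ext hRx
      rw [hsub, hRx, hx]
    have hSR : ∀ ξ : H₁, S ⟨R ξ, memS ξ⟩ = ξ - R ξ := fun ξ => eq_sub_of_add_eq' (hRS ξ)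
    -- the operator V = T ∘ R
    have hVbound : ∀ ξ : H₁, ‖T ⟨R ξ, memT ξ⟩‖ ≤ (1 + ‖R‖) * ‖ξ‖ := by
      intro ξ
      have h1 : ‖T ⟨R ξ, memT ξ⟩‖ = ‖S ⟨R ξ, memS ξ⟩‖ := (hnorm (R ξ) (memS ξ) (memT ξ)).symm
      rw [h1, hSR ξ]
      calc ‖ξ - R ξ‖ ≤ ‖ξ‖ + ‖R ξ‖ := norm_sub_le _ _
        _ ≤ ‖ξ‖ + ‖R‖ * ‖ξ‖ := by gcongr; exact R.le_opNorm ξ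
        _ = (1 + ‖R‖) * ‖ξ‖ := by ring
    let Vlin : H₁ →ₗ[ℂ] H₂ :=
      { toFun := fun ξ => T ⟨R ξ, memT ξ⟩
        map_add' := fun ξ η => by
          have h : (⟨R (ξ + η), memT (ξ + η)⟩ : T.domain) = ⟨R ξ, memT ξ⟩ + ⟨R η, memT η⟩ :=
            Subtype.ext (by simp [AddSubmonoid.coe_add])
          show (T ⟨R (ξ + η), memT (ξ + η)⟩ : H₂) = T ⟨R ξ, memT ξ⟩ + T ⟨R η, memT η⟩
          rw [h, LinearPMap.map_add]
        map_smul' := fun c ξ => by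
          have h : (⟨R (c • ξ), memT (c • ξ)⟩ : T.domain) = c • (⟨R ξ, memT ξ⟩ : T.domain) :=
            Subtype.ext (by simp)
          show (T ⟨R (c • ξ), memT (c • ξ)⟩ : H₂) = c • (T ⟨R ξ, memT ξ⟩ : H₂)
          rw [h, LinearPMap.map_smul] }
    let V : H₁ →L[ℂ] H₂ := Vlin.mkContinuous (1 + ‖R‖) hVbound
    -- R preserves Kᗮ
    have hRperp : ∀ ξ ∈ Kᗮ, R ξ ∈ Kᗮ := by
      intro ξ hξ
      obtain ⟨x', hx'perp, hx'S, hx'K⟩ := hrep ⟨R ξ, memS ξ⟩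
      have hthis : R ξ + S x' = ξ := by rw [hx'S]; exact hRS ξ
      have hmem2 : (x' : H₁) + S x' ∈ Kᗮ := Kᗮ.add_mem hx'perp (hSperp x')
      have hk0 : R ξ - (x' : H₁) ∈ Kᗮ := by
        have heq2 : R ξ - (x' : H₁) = ξ - ((x' : H₁) + S x') := by
          calc R ξ - (x' : H₁) = (R ξ + S x') - ((x' : H₁) + S x') := by abel
            _ = ξ - ((x' : H₁) + S x') := by rw [hthis]
        rw [heq2]
        exact Kᗮ.sub_mem hξ hmem2
      have hzero : R ξ - (x' : H₁) = 0 := by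
        have h0 := (Submodule.mem_orthogonal _ _).mp hk0 _ hx'K
        exact inner_self_eq_zero.mp h0
      have hfin : R ξ = (x' : H₁) := sub_eq_zero.mp hzero
      rw [hfin]; exact hx'perp
    -- R is the identity on K
    have hRK : ∀ k ∈ K, R k = k := by
      intro k hk
      have hk' : k ∈ (LinearMap.ker S.toFun).map S.domain.subtype := by rw [hkerS']; exact hk
      obtain ⟨z, hz, hzk⟩ := Submodule.mem_map.mp hk'
      simp only [Submodule.subtype_apply] at hzk
      have hz0 : S z = 0 := LinearMap.mem_ker.mp hz
      calc R k = R ((z : H₁) + S z) := by rw [hz0, add_zero, hzk]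
        _ = (z : H₁) := hR z
        _ = k := hzk
    -- the key operator identity
    have heq : R - Pk = Tinv.comp (V.comp (ContinuousLinearMap.id ℂ H₁ - Pk)) := by
      ext ξ
      have hkK : (Submodule.orthogonalProjectionOnto K ξ : H₁) ∈ K := SetLike.coe_mem _
      set k : H₁ := (Submodule.orthogonalProjectionOnto K ξ : H₁) with hkdef
      have hk' : ξ - k ∈ Kᗮ := Submodule.sub_starProjection_mem_orthogonal ξ
      have hPkk : Pk k = k := hPk1 k hkK
      have hPkk' : Pk (ξ - k) = 0 := hPk2 _ hk'
      have hPkξ : Pk ξ = k := by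
        have h : Pk ξ = Pk k + Pk (ξ - k) := by rw [← map_add]; congr 1; abel
        rw [h, hPkk, hPkk', add_zero]
      have hRξ : R ξ = k + R (ξ - k) := by
        have h : R ξ = R k + R (ξ - k) := by rw [← map_add]; congr 1; abel
        rw [h, hRK k hkK]
      -- compute RHS
      have hmemperp : R (ξ - k) ∈ Kᗮ := hRperp _ hk'
      have hTinvV : Tinv (V (ξ - k)) = R (ξ - k) := by
        have : V (ξ - k) = T ⟨R (ξ - k), memT (ξ - k)⟩ := rfl
        rw [this]
        exact hTinv ⟨R (ξ - k), memT (ξ - k)⟩ hmemperp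
      simp only [ContinuousLinearMap.sub_apply, ContinuousLinearMap.comp_apply,
        ContinuousLinearMap.id_apply]
      rw [hPkξ, hRξ, hTinvV]
      abel
    have hcoe : ⇑(R - Pk) = ⇑Tinv ∘ ⇑(V.comp (ContinuousLinearMap.id ℂ H₁ - Pk)) := by
      rw [heq]; rfl
    rw [hcoe]
    exact hTinvC.comp_clm _
  refine ⟨?_, partb, ?_⟩
  · -- Part (a)
    intro Sinv h1 h2 _h3
    rw [hkerS'] at h1
    set M : Submodule ℂ H₁ := LinearMap.range S.toFun with hM
    set N : Submodule ℂ H₁ := M.topologicalClosure with hN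
    haveI : CompleteSpace N := M.isClosed_topologicalClosure.completeSpace_coe
    have hNperp : Nᗮ = Mᗮ := by
      rw [hN, ← Submodule.orthogonal_orthogonal_eq_closure, Submodule.triorthogonal_eq_orthogonal]
    refine ⟨closure (Tinv '' Metric.closedBall 0 1),
      hTinvC.isCompact_closure_image_closedBall 1, ?_⟩
    refine Filter.mem_of_superset (Metric.ball_mem_nhds 0 one_pos) fun ξ hξ => ?_
    rw [Set.mem_preimage]
    set ξ₁ : H₁ := (Submodule.orthogonalProjectionOnto N ξ : H₁) with hξ₁def
    have hdec : Sinv ξ = Sinv ξ₁ := by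
      have hperp : ξ - ξ₁ ∈ Mᗮ := hNperp ▸ Submodule.sub_starProjection_mem_orthogonal ξ
      have h0 : Sinv (ξ - ξ₁) = 0 := h2 _ hperp
      have : Sinv ξ - Sinv ξ₁ = 0 := by rw [← map_sub]; exact h0
      have := sub_eq_zero.mp this
      exact this
    have hξ₁lt : ‖ξ₁‖ < 1 := by
      have hle : ‖ξ₁‖ ≤ ‖ξ‖ := by
        have h := (Submodule.orthogonalProjectionOnto N).le_opNorm ξ
        have h2' : ‖Submodule.orthogonalProjectionOnto N ξ‖ ≤ 1 * ‖ξ‖ := by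
          refine h.trans ?_
          gcongr
          exact Submodule.orthogonalProjectionOnto_norm_le N
        simpa [hξ₁def] using h2'
      exact lt_of_le_of_lt hle (mem_ball_zero_iff.mp hξ)
    rw [hdec, Metric.mem_closure_iff]
    intro ε hε
    have hξ₁M : ξ₁ ∈ closure (M : Set H₁) := by
      have h := SetLike.coe_mem (Submodule.orthogonalProjectionOnto N ξ)
      have hset : (N : Set H₁) = closure (M : Set H₁) := by
        rw [hN, Submodule.topologicalClosure_coe]
      rw [← hset]
      exact h
    set δ : ℝ := min (ε / (‖Sinv‖ + 1)) (1 - ‖ξ₁‖) with hδ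
    have hδpos : 0 < δ := by
      apply lt_min
      · positivity
      · linarith
    obtain ⟨η, hηM, hηd⟩ := Metric.mem_closure_iff.mp hξ₁M δ hδpos
    obtain ⟨x0, hx0⟩ := hηM
    obtain ⟨x, hxperp, hxS, -⟩ := hrep x0
    have hxη : S x = η := by rw [hxS]; exact hx0
    set xT : T.domain := ⟨(x : H₁), hdom ▸ x.2⟩ with hxT
    have hTx : Tinv (T xT) = (x : H₁) := hTinv xT hxperp
    have hnormx : ‖T xT‖ ≤ 1 := by
      have h1' : ‖T xT‖ = ‖S x‖ := by
        have := hnorm (x : H₁) x.2 (hdom ▸ x.2)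
        simpa [hxT] using this.symm
      have h2' : ‖S x‖ = ‖η‖ := by rw [hxη]
      have h3' : ‖η‖ ≤ ‖ξ₁‖ + δ := by
        have : dist ξ₁ η < δ := hηd
        have hd : ‖η - ξ₁‖ < δ := by rwa [dist_eq_norm, norm_sub_rev] at this
        calc ‖η‖ = ‖ξ₁ + (η - ξ₁)‖ := by congr 1; abel
          _ ≤ ‖ξ₁‖ + ‖η - ξ₁‖ := norm_add_le _ _
          _ ≤ ‖ξ₁‖ + δ := by linarith
      have h4' : ‖ξ₁‖ + δ ≤ 1 := by
        have := min_le_right (ε / (‖Sinv‖ + 1)) (1 - ‖ξ₁‖)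
        rw [← hδ] at this
        linarith
      rw [h1', h2']
      linarith
    refine ⟨Tinv (T xT), ?_, ?_⟩
    · exact Set.mem_image_of_mem ⇑Tinv (mem_closedBall_zero_iff.mpr hnormx)
    have hSinvη : Sinv η = (x : H₁) := by
      rw [← hxη]
      exact h1 x hxperp
    rw [hTx, ← hSinvη, dist_eq_norm, ← map_sub]
    have hd : ‖ξ₁ - η‖ < δ := by rwa [dist_eq_norm] at hηd
    calc ‖Sinv (ξ₁ - η)‖ ≤ ‖Sinv‖ * ‖ξ₁ - η‖ := Sinv.le_opNorm _
      _ ≤ (‖Sinv‖ + 1) * ‖ξ₁ - η‖ := by gcongr; linarith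
      _ < (‖Sinv‖ + 1) * δ := by
          have hpos : (0:ℝ) < ‖Sinv‖ + 1 := by positivity
          exact (mul_lt_mul_iff_right₀ hpos).mpr hd
      _ ≤ (‖Sinv‖ + 1) * (ε / (‖Sinv‖ + 1)) := by
          have := min_le_left (ε / (‖Sinv‖ + 1)) (1 - ‖ξ₁‖)
          rw [← hδ] at this
          gcongr
      _ = ε := by field_simp
  · -- Part (c)
    intro hfin R hR hRsurj
    haveI : FiniteDimensional ℂ K := hfin
    set Pk : H₁ →L[ℂ] H₁ := K.subtypeL.comp (Submodule.orthogonalProjectionOnto K) with hPkdef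
    have hPk1 : ∀ ξ ∈ (LinearMap.ker S.toFun).map S.domain.subtype, Pk ξ = ξ := by
      intro ξ hξ
      rw [hkerS'] at hξ
      simp only [hPkdef, ContinuousLinearMap.comp_apply, Submodule.subtypeL_apply]
      exact Submodule.starProjection_eq_self_iff.mpr hξ
    have hPk2 : ∀ ξ ∈ ((LinearMap.ker S.toFun).map S.domain.subtype)ᗮ, Pk ξ = 0 := by
      intro ξ hξ
      rw [hkerS'] at hξ
      simp only [hPkdef, ContinuousLinearMap.comp_apply, Submodule.subtypeL_apply]
      rw [Submodule.orthogonalProjectionOnto_apply_of_mem_orthogonal hξ]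
      rfl
    have h1 := partb R Pk hR hRsurj hPk1 hPk2
    have h2 : IsCompactOperator ⇑Pk := by
      have := (isCompactOperator_of_finiteDimensional_codomain
        (Submodule.orthogonalProjectionOnto K)).clm_comp K.subtypeL
      exact this
    have hsum : ⇑R = ⇑(R - Pk) + ⇑Pk := by
      ext ξ
      simp [ContinuousLinearMap.sub_apply]
    rw [hsum]
    exact h1.add h2
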